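/- For every fixed r ∈ ℝ, the function e : ℝ³ → ℝ defined by e(u) = (1/2)‖u‖² − (1/4)(min(r − u₃, 0))² is (1/2)-strongly convex on ℝ³; that is, for all u, v ∈ ℝ³ and all θ ∈ [0,1], e(θu + (1−θ)v) ≤ θ e(u) + (1−θ) e(v) − θ(1−θ)·(1/4)·‖u − v‖². -/

import Mathlib

/-- 1D key lemma: the squared negative part is "1-semiconcave". -/
lemma energy_density_key (r a s t : ℝ) (ha : 0 ≤ a) (ha1 : a ≤ 1) :
    a * (min (r - s) 0)^2 + (1 - a) * (min (r - t) 0)^2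
      - (min (r - (a * s + (1 - a) * t)) 0)^2 ≤ a * (1 - a) * (s - t)^2 := by
  have h1 : 0 ≤ 1 - a := by linarith
  rw [min_def, min_def, min_def]
  split_ifs <;>
  nlinarith [mul_nonneg ha h1, sq_nonneg (s - t), sq_nonneg (r - s), sq_nonneg (r - t),
    mul_nonneg (mul_nonneg ha h1) (sq_nonneg (s - t)),
    mul_nonneg ha (sq_nonneg (r - s)), mul_nonneg h1 (sq_nonneg (r - t)),
    mul_nonneg ha (sq_nonneg (r - t)), mul_nonneg h1 (sq_nonneg (r - s)),
    mul_nonneg ha (mul_nonneg h1 (sq_nonneg (r - s))),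
    mul_nonneg ha (mul_nonneg h1 (sq_nonneg (r - t)))]

/-- The energy density `e(u) = (1/2)‖u‖² − (1/4)(min(r − u₃, 0))²` is
`(1/2)`-strongly convex on `ℝ³`. -/
theorem energy_density_strongly_convex (r : ℝ)
    (e : EuclideanSpace ℝ (Fin 3) → ℝ)
    (he : ∀ u, e u = (1/2) * ‖u‖^2 - (1/4) * (min (r - u 2) 0)^2) :
    ∀ (u v : EuclideanSpace ℝ (Fin 3)) (θ : ℝ), θ ∈ Set.Icc (0:ℝ) 1 →
      e (θ • u + (1 - θ) • v) ≤
        θ * e u + (1 - θ) * e v - θ * (1 - θ) * (1/4) * ‖u - v‖^2 := by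
  intro u v θ hθ
  obtain ⟨h0, h1⟩ := hθ
  have h1' : (0:ℝ) ≤ 1 - θ := by linarith
  set w : EuclideanSpace ℝ (Fin 3) := θ • u + (1 - θ) • v with hw
  have hw2 : w 2 = θ * u 2 + (1 - θ) * v 2 := by
    simp [hw, PiLp.add_apply, PiLp.smul_apply, smul_eq_mul]
  -- inner product expansions
  have hW : ‖w‖^2 = θ^2 * ‖u‖^2 + 2 * (θ * (1 - θ)) * (inner ℝ u v : ℝ)
      + (1 - θ)^2 * ‖v‖^2 := by
    rw [hw, @norm_add_sq_real, norm_smul, norm_smul, real_inner_smul_left,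
      real_inner_smul_right, Real.norm_eq_abs, Real.norm_eq_abs,
      abs_of_nonneg h0, abs_of_nonneg h1']
    ring
  have hD : ‖u - v‖^2 = ‖u‖^2 - 2 * (inner ℝ u v : ℝ) + ‖v‖^2 := by
    exact norm_sub_sq_real u v
  -- coordinate bound
  have hcoord : (u 2 - v 2)^2 ≤ ‖u - v‖^2 := by
    have h := EuclideanSpace.norm_eq (u - v)
    have hnn : (0:ℝ) ≤ ∑ i, ‖(u - v) i‖^2 :=
      Finset.sum_nonneg fun i _ => sq_nonneg _
    have : ‖u - v‖^2 = ∑ i, ‖(u - v) i‖^2 := by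
      rw [h, Real.sq_sqrt hnn]
    rw [this, Fin.sum_univ_three]
    have huv : (u - v) 2 = u 2 - v 2 := by simp [PiLp.sub_apply]
    rw [huv]
    simp only [Real.norm_eq_abs, sq_abs]
    nlinarith [sq_nonneg ((u - v) 0), sq_nonneg ((u - v) 1)]
  have hkey := energy_density_key r θ (u 2) (v 2) h0 h1
  rw [he, he, he, hw2, hW]
  have hmul : 0 ≤ θ * (1 - θ) := mul_nonneg h0 h1'
  nlinarith [mul_le_mul_of_nonneg_left hcoord hmul, hD, hkey]
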